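/- arXiv:1705.01073 — 3 statements merged into one kernel-verified Lean document; each statement's English description precedes it below -/
import Mathlib

section
/- Along any solution of the continuous inertial mirror descent system, assuming f∘x is differentiable, the trajectory derivative of the function W_*(ζ) = W(ζ) − ⟨ζ, x*⟩ satisfies, for every t ≥ 0, the inequality d/dt W_*(ζ(t)) ≤ (f(x*) − f(x(t))) − μ(t)·d/dt[f(x(t)) − f*]. -/
open RealInnerProductSpace

lemma inner_gradient_eq_fderiv {H : Type*} [NormedAddCommGroup H]
    [InnerProductSpace ℝ H] [CompleteSpace H] (g : H → ℝ) (y v : H) :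
    ⟪gradient g y, v⟫ = fderiv ℝ g y v := by
  rw [← InnerProductSpace.toDual_apply_apply]
  simp [gradient]

lemma hasDerivAt_comp_inner {H : Type*} [NormedAddCommGroup H]
    [InnerProductSpace ℝ H] [CompleteSpace H] (g : H → ℝ) (c : ℝ → H)
    (hg : Differentiable ℝ g) (hc : Differentiable ℝ c) (t : ℝ) :
    HasDerivAt (fun s => g (c s)) ⟪gradient g (c t), deriv c t⟫ t := by
  have h := (hg (c t)).hasFDerivAt.comp_hasDerivAt t (hc t).hasDerivAt
  rwa [← inner_gradient_eq_fderiv] at h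

lemma convex_gradient_ineq {H : Type*} [NormedAddCommGroup H]
    [InnerProductSpace ℝ H] [CompleteSpace H] (f : H → ℝ)
    (hconv : ConvexOn ℝ Set.univ f) (hdiff : Differentiable ℝ f) (a b : H) :
    ⟪gradient f a, b - a⟫ ≤ f b - f a := by
  set g : ℝ → ℝ := fun s => f (a + s • (b - a)) with hg
  have harg : ∀ s : ℝ, a + s • (b - a) = AffineMap.lineMap a b s := by
    intro s; rw [AffineMap.lineMap_apply_module]; module
  have hgc : ConvexOn ℝ Set.univ g := by
    have h := hconv.comp_affineMap (AffineMap.lineMap a b : ℝ →ᵃ[ℝ] H)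
    simp only [Set.preimage_univ] at h
    have hgeq : g = f ∘ (AffineMap.lineMap a b : ℝ →ᵃ[ℝ] H) := by
      funext s; simp [g, Function.comp, harg s]
    rw [hgeq]; exact h
  have hc : Differentiable ℝ (fun s : ℝ => a + s • (b - a)) := by
    apply Differentiable.add (differentiable_const a)
    exact (differentiable_id.smul_const (b - a))
  have hderiv : HasDerivAt (fun s : ℝ => a + s • (b - a)) (b - a) 0 := by
    have h1 : HasDerivAt (fun s : ℝ => s • (b - a)) ((1 : ℝ) • (b - a)) 0 :=
      (hasDerivAt_id 0).smul_const (b - a)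
    simpa using h1.const_add a
  have hgd : HasDerivAt g ⟪gradient f a, b - a⟫ 0 := by
    have h := (hdiff (a + (0:ℝ) • (b - a))).hasFDerivAt.comp_hasDerivAt 0 hderiv
    rw [show a + (0:ℝ) • (b - a) = a by simp, ← inner_gradient_eq_fderiv] at h
    exact h
  have hs := hgc.le_slope_of_hasDerivAt (Set.mem_univ 0) (Set.mem_univ 1)
    (by norm_num) hgd
  have : slope g 0 1 = f b - f a := by simp [slope, g]
  linarith [hs.trans_eq this]

/-- Along any solution of the continuous inertial mirror descent system, the
trajectory derivative of `W_*(ζ) = W(ζ) − ⟨ζ, x*⟩` satisfies, for every `t ≥ 0`,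
`d/dt W_*(ζ(t)) ≤ (f(x*) − f(x(t))) − μ(t)·d/dt[f(x(t)) − f*]`. -/
theorem imd_trajectory_derivative_inequality
    {H : Type*} [NormedAddCommGroup H] [InnerProductSpace ℝ H]
    [FiniteDimensional ℝ H]
    (f W : H → ℝ) (μ : ℝ → ℝ) (ζ x : ℝ → H) (xstar : H)
    (hf_conv : ConvexOn ℝ Set.univ f)
    (hf_diff : Differentiable ℝ f)
    (hmin : ∀ y, f xstar ≤ f y)
    (hW_conv : ConvexOn ℝ Set.univ W)
    (hW_diff : Differentiable ℝ W)
    (hW_grad_cont : Continuous (gradient W))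
    (hW0 : W 0 = 0) (hWgrad0 : gradient W 0 = 0)
    (hμ_diff : Differentiable ℝ μ)
    (hμ_nonneg : ∀ t ≥ (0 : ℝ), 0 ≤ μ t)
    (hζ_diff : Differentiable ℝ ζ) (hx_diff : Differentiable ℝ x)
    (hζ0 : ζ 0 = 0) (hx0 : x 0 = gradient W 0)
    (hζ' : ∀ t ≥ (0 : ℝ), deriv ζ t = -gradient f (x t))
    (hmirror : ∀ t ≥ (0 : ℝ), μ t • deriv x t + x t = gradient W (ζ t))
    (hfx_diff : Differentiable ℝ (fun s => f (x s))) :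
    ∀ t ≥ (0 : ℝ),
      deriv (fun s => W (ζ s) - ⟪ζ s, xstar⟫) t
        ≤ (f xstar - f (x t)) - μ t * deriv (fun s => f (x s) - f xstar) t := by
  intro t ht
  -- derivative of W ∘ ζ
  have hWζ : HasDerivAt (fun s => W (ζ s)) ⟪gradient W (ζ t), deriv ζ t⟫ t :=
    hasDerivAt_comp_inner W ζ hW_diff hζ_diff t
  -- derivative of ⟪ζ s, xstar⟫
  have hinner : HasDerivAt (fun s => ⟪ζ s, xstar⟫) ⟪deriv ζ t, xstar⟫ t := by
    have h := (hζ_diff t).hasDerivAt.inner ℝ (hasDerivAt_const t xstar)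
    simpa using h
  have hL : deriv (fun s => W (ζ s) - ⟪ζ s, xstar⟫) t
      = ⟪gradient W (ζ t), deriv ζ t⟫ - ⟪deriv ζ t, xstar⟫ :=
    (hWζ.sub hinner).deriv
  -- derivative of f ∘ x
  have hfx : HasDerivAt (fun s => f (x s)) ⟪gradient f (x t), deriv x t⟫ t :=
    hasDerivAt_comp_inner f x hf_diff hx_diff t
  have hR : deriv (fun s => f (x s) - f xstar) t = ⟪gradient f (x t), deriv x t⟫ :=
    (hfx.sub_const (f xstar)).deriv
  rw [hL, hR, hζ' t ht]
  have hm := hmirror t ht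
  have hgradW : gradient W (ζ t) = μ t • deriv x t + x t := hm.symm
  rw [hgradW]
  have hconv : ⟪gradient f (x t), xstar - x t⟫ ≤ f xstar - f (x t) :=
    convex_gradient_ineq f hf_conv hf_diff (x t) xstar
  have expand : ⟪μ t • deriv x t + x t, -gradient f (x t)⟫ - ⟪-gradient f (x t), xstar⟫
      = -(μ t * ⟪gradient f (x t), deriv x t⟫) + ⟪gradient f (x t), xstar - x t⟫ := by
    simp [inner_add_left, inner_smul_left, inner_neg_left, inner_neg_right,
      inner_sub_right, real_inner_comm]
    ring
  rw [expand]
  linarith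
end

section
/- Along any solution of the continuous inertial mirror descent system with parameter μ satisfying μ(0) = 0 and μ'(t) ≤ 1 for all t > 0, one has for every t > 0 with μ(t) > 0 the bound f(x(t)) − f* ≤ V(x*)/μ(t), where V(x*) = sup_ζ (⟨ζ, x*⟩ − W(ζ)). -/
open RealInnerProductSpace

section Aux

variable {H : Type*} [NormedAddCommGroup H] [InnerProductSpace ℝ H] [CompleteSpace H]

/-- Chain rule in gradient form. -/
lemma hasDerivAt_comp_grad {f : H → ℝ} {x : ℝ → H} {x' : H} {t : ℝ}
    (hf : DifferentiableAt ℝ f (x t)) (hx : HasDerivAt x x' t) :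
    HasDerivAt (fun s => f (x s)) ⟪gradient f (x t), x'⟫ t := by
  have h : HasFDerivAt f (InnerProductSpace.toDual ℝ H (gradient f (x t))) (x t) :=
    hasGradientAt_iff_hasFDerivAt.mp hf.hasGradientAt
  have := h.comp_hasDerivAt t hx
  rw [InnerProductSpace.toDual_apply_apply] at this
  exact this

/-- Gradient inequality for convex differentiable functions. -/
lemma grad_ineq {f : H → ℝ} (hconv : ConvexOn ℝ Set.univ f)
    (hdiff : Differentiable ℝ f) (a b : H) :
    ⟪gradient f a, b - a⟫ ≤ f b - f a := by
  set c : ℝ → H := fun s => a + s • (b - a) with hc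
  have hcd : ∀ s : ℝ, HasDerivAt c (b - a) s := fun s => by
    simpa [hc] using ((hasDerivAt_id s).smul_const (b - a)).const_add a
  have hg : HasDerivAt (fun s => f (c s)) ⟪gradient f (c 0), b - a⟫ 0 :=
    hasDerivAt_comp_grad (hdiff _) (hcd 0)
  have hc0 : c 0 = a := by simp [hc]
  rw [hc0] at hg
  have hconv' : ConvexOn ℝ Set.univ (fun s => f (c s)) := by
    have := hconv.comp_affineMap (AffineMap.lineMap a b : ℝ →ᵃ[ℝ] H)
    have heq : (f ∘ (AffineMap.lineMap a b : ℝ →ᵃ[ℝ] H)) = fun s => f (c s) := by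
      funext s; simp only [hc, AffineMap.lineMap_apply, Function.comp, vsub_eq_sub, vadd_eq_add]; rw [add_comm]
    rw [heq] at this
    simpa using this
  have hs := hconv'.le_slope_of_hasDerivAt (Set.mem_univ 0) (Set.mem_univ 1)
    one_pos hg
  have : slope (fun s => f (c s)) 0 1 = f b - f a := by
    simp [slope_def_field, hc]
  rw [this] at hs
  exact hs

end Aux

/-- Along any solution of the continuous inertial mirror descent system with
parameter `μ` satisfying `μ(0) = 0` and `μ'(t) ≤ 1` for all `t > 0`, one has for
every `t > 0` with `μ(t) > 0` the bound `f(x(t)) − f* ≤ V(x*)/μ(t)`, where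
`V(x*) = sup_ζ (⟨ζ, x*⟩ − W(ζ))`. -/
theorem imd_error_bound_general_mu
    {H : Type*} [NormedAddCommGroup H] [InnerProductSpace ℝ H]
    [FiniteDimensional ℝ H]
    (f W : H → ℝ) (μ : ℝ → ℝ) (ζ x : ℝ → H) (xstar : H)
    (hf_conv : ConvexOn ℝ Set.univ f)
    (hf_diff : Differentiable ℝ f)
    (hmin : ∀ y, f xstar ≤ f y)
    (hW_conv : ConvexOn ℝ Set.univ W)
    (hW_diff : Differentiable ℝ W)
    (hW_grad_cont : Continuous (gradient W))
    (hW0 : W 0 = 0) (hWgrad0 : gradient W 0 = 0)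
    (hV_fin : BddAbove (Set.range fun z => ⟪z, xstar⟫ - W z))
    (hμ_diff : Differentiable ℝ μ)
    (hμ'_cont : Continuous (deriv μ))
    (hμ_nonneg : ∀ t ≥ (0 : ℝ), 0 ≤ μ t)
    (hμ0 : μ 0 = 0)
    (hμ'_le_one : ∀ t > (0 : ℝ), deriv μ t ≤ 1)
    (hζ_diff : Differentiable ℝ ζ) (hx_diff : Differentiable ℝ x)
    (hζ0 : ζ 0 = 0) (hx0 : x 0 = gradient W 0)
    (hζ' : ∀ t ≥ (0 : ℝ), deriv ζ t = -gradient f (x t))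
    (hmirror : ∀ t ≥ (0 : ℝ), μ t • deriv x t + x t = gradient W (ζ t))
    (hfx_cont : Continuous (fun s => f (x s)))
    (hfx_diff : Differentiable ℝ (fun s => f (x s))) :
    ∀ t > (0 : ℝ), 0 < μ t →
      f (x t) - f xstar ≤ (⨆ z : H, (⟪z, xstar⟫ - W z)) / μ t := by
  intro t ht hμt
  -- Lyapunov function
  set E : ℝ → ℝ := fun s => μ s * (f (x s) - f xstar) - ⟪ζ s, xstar⟫ + W (ζ s) with hE
  -- derivative of E
  set D : ℝ → ℝ := fun s =>
    (deriv μ s * (f (x s) - f xstar) + μ s * ⟪gradient f (x s), deriv x s⟫)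
      - ⟪deriv ζ s, xstar⟫ + ⟪gradient W (ζ s), deriv ζ s⟫ with hD
  have hEderiv : ∀ s : ℝ, HasDerivAt E (D s) s := by
    intro s
    have h1 : HasDerivAt (fun u => μ u * (f (x u) - f xstar))
        (deriv μ s * (f (x s) - f xstar) + μ s * ⟪gradient f (x s), deriv x s⟫) s :=
      (hμ_diff s).hasDerivAt.mul
        ((hasDerivAt_comp_grad (hf_diff _) (hx_diff s).hasDerivAt).sub_const (f xstar))
    have h2 : HasDerivAt (fun u => (⟪ζ u, xstar⟫ : ℝ)) ⟪deriv ζ s, xstar⟫ s := by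
      have := HasDerivAt.inner ℝ (hζ_diff s).hasDerivAt (hasDerivAt_const s xstar)
      simpa using this
    have h3 : HasDerivAt (fun u => W (ζ u)) ⟪gradient W (ζ s), deriv ζ s⟫ s :=
      hasDerivAt_comp_grad (hW_diff _) (hζ_diff s).hasDerivAt
    exact (h1.sub h2).add h3
  -- D is nonpositive for s > 0
  have hDnonpos : ∀ s > (0 : ℝ), D s ≤ 0 := by
    intro s hs
    have hζ's := hζ' s hs.le
    have hmir := hmirror s hs.le
    have hsubst : μ s * ⟪gradient f (x s), deriv x s⟫
        = ⟪gradient f (x s), gradient W (ζ s) - x s⟫ := by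
      rw [← real_inner_smul_right, ← hmir]; simp
    have hgi : ⟪gradient f (x s), xstar - x s⟫ ≤ f xstar - f (x s) :=
      grad_ineq hf_conv hf_diff (x s) xstar
    have hfs : f xstar ≤ f (x s) := hmin _
    have hμ's : deriv μ s ≤ 1 := hμ'_le_one s hs
    have hD1 : D s = (deriv μ s - 1) * (f (x s) - f xstar)
        + (⟪gradient f (x s), xstar - x s⟫ - (f xstar - f (x s))) := by
      rw [hD]
      simp only [hζ's, hsubst, inner_neg_left, inner_neg_right, inner_sub_right]
      rw [real_inner_comm (gradient W (ζ s)) (gradient f (x s))]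
      ring
    rw [hD1]
    have h1 : (deriv μ s - 1) * (f (x s) - f xstar) ≤ 0 :=
      mul_nonpos_of_nonpos_of_nonneg (by linarith) (by linarith)
    linarith
  -- E is antitone on [0, t]
  have hEanti : AntitoneOn E (Set.Icc 0 t) := by
    apply antitoneOn_of_deriv_nonpos (convex_Icc 0 t)
    · have : Differentiable ℝ E := fun s => (hEderiv s).differentiableAt
      exact this.continuous.continuousOn
    · intro s _
      exact (hEderiv s).differentiableAt.differentiableWithinAt
    · intro s hs
      rw [interior_Icc] at hs
      rw [(hEderiv s).deriv]
      exact hDnonpos s hs.1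
  have hE0 : E 0 = 0 := by simp [hE, hζ0, hμ0, hW0]
  have hEt : E t ≤ 0 := by
    have := hEanti (Set.left_mem_Icc.mpr ht.le) (Set.right_mem_Icc.mpr ht.le) ht.le
    rwa [hE0] at this
  have hkey : μ t * (f (x t) - f xstar) ≤ ⟪ζ t, xstar⟫ - W (ζ t) := by
    have : μ t * (f (x t) - f xstar) - ⟪ζ t, xstar⟫ + W (ζ t) ≤ 0 := hEt
    linarith
  have hsup : ⟪ζ t, xstar⟫ - W (ζ t) ≤ ⨆ z : H, (⟪z, xstar⟫ - W z) :=
    le_ciSup hV_fin (ζ t)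
  rw [le_div_iff₀ hμt]
  calc (f (x t) - f xstar) * μ t = μ t * (f (x t) - f xstar) := by ring
    _ ≤ ⟪ζ t, xstar⟫ - W (ζ t) := hkey
    _ ≤ _ := hsup
end

section
/- Consider the Euclidean case W(ζ) = ‖ζ‖²/2 (so ∇W(ζ) = ζ and V(x) = ‖x‖²/2) of the continuous inertial mirror descent system with μ(t) = t: let ζ, x : [0,∞) → H be differentiable curves with ζ'(t) = −∇f(x(t)), ζ(0) = 0, and t·x'(t) + x(t) = ζ(t) for all t ≥ 0, with x(0) = 0. Then for every t > 0, f(x(t)) − f* ≤ ‖x*‖²/(2t). -/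
open RealInnerProductSpace

/-- Pairing of the gradient equals the Fréchet derivative applied. -/
lemma inner_gradient_apply' {H : Type*} [NormedAddCommGroup H] [InnerProductSpace ℝ H]
    [CompleteSpace H] (f : H → ℝ) (a v : H) :
    ⟪gradient f a, v⟫ = fderiv ℝ f a v := by
  rw [gradient, InnerProductSpace.toDual_symm_apply]

/-- First-order condition for convex differentiable functions. -/
lemma convex_grad_ineq' {H : Type*} [NormedAddCommGroup H] [InnerProductSpace ℝ H]
    [CompleteSpace H] (f : H → ℝ) (hc : ConvexOn ℝ Set.univ f)
    (hd : Differentiable ℝ f) (a b : H) :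
    f a + ⟪gradient f a, b - a⟫ ≤ f b := by
  set g : ℝ → ℝ := fun s => f (a + s • (b - a)) with hg
  have hcurve : ∀ s : ℝ, HasDerivAt (fun s : ℝ => a + s • (b - a)) (b - a) s := by
    intro s
    simpa using ((hasDerivAt_id s).smul_const (b - a)).const_add a
  have hgc : ConvexOn ℝ Set.univ g := by
    have := hc.comp_affineMap (AffineMap.lineMap a b : ℝ →ᵃ[ℝ] H)
    have heq : ∀ s : ℝ, (AffineMap.lineMap a b : ℝ →ᵃ[ℝ] H) s = a + s • (b - a) := by
      intro s; simp [AffineMap.lineMap_apply]; abel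
    exact (this.subset (by simp) convex_univ).congr (fun s _ => by simp [hg, heq s])
  have hgd : HasDerivAt g (fderiv ℝ f a (b - a)) 0 := by
    have h0 : a + (0:ℝ) • (b - a) = a := by simp
    have := (hd (a + (0:ℝ) • (b - a))).hasFDerivAt.comp_hasDerivAt 0 (hcurve 0)
    simpa [h0, Function.comp_def] using this
  have hs := hgc.le_slope_of_hasDerivAt (Set.mem_univ (0:ℝ)) (Set.mem_univ (1:ℝ))
    one_pos hgd
  have hslope : slope g 0 1 = f b - f a := by
    simp [slope_def_field, hg]
  rw [hslope] at hs
  have := inner_gradient_apply' f a (b - a)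
  linarith [hs, this.le, this.ge]

/-- Euclidean case `W(ζ) = ‖ζ‖²/2` (so `∇W(ζ) = ζ`, `V(x) = ‖x‖²/2`) of the
continuous inertial mirror descent system with `μ(t) = t`: if
`ζ'(t) = −∇f(x(t))`, `ζ(0) = 0`, and `t·x'(t) + x(t) = ζ(t)` for all `t ≥ 0`,
with `x(0) = 0`, then for every `t > 0`, `f(x(t)) − f* ≤ ‖x*‖²/(2t)`. -/
theorem imd_error_bound_euclidean
    {H : Type*} [NormedAddCommGroup H] [InnerProductSpace ℝ H]
    [FiniteDimensional ℝ H]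
    (f : H → ℝ) (ζ x : ℝ → H) (xstar : H)
    (hf_conv : ConvexOn ℝ Set.univ f)
    (hf_diff : Differentiable ℝ f)
    (hmin : ∀ y, f xstar ≤ f y)
    (hζ_diff : Differentiable ℝ ζ) (hx_diff : Differentiable ℝ x)
    (hζ0 : ζ 0 = 0) (hx0 : x 0 = 0)
    (hζ' : ∀ t ≥ (0 : ℝ), deriv ζ t = -gradient f (x t))
    (hmirror : ∀ t ≥ (0 : ℝ), t • deriv x t + x t = ζ t)
    (hfx_cont : Continuous (fun s => f (x s)))
    (hfx_diff : Differentiable ℝ (fun s => f (x s))) :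
    ∀ t > (0 : ℝ),
      f (x t) - f xstar ≤ ‖xstar‖ ^ 2 / (2 * t) := by
  intro T hT
  set fs := f xstar with hfs
  set F : ℝ → ℝ := fun s => f (x s) with hF
  set E : ℝ → ℝ := fun s => s * (F s - fs) + ‖ζ s - xstar‖ ^ 2 / 2 with hE
  -- derivative of E at any s
  have hEderiv : ∀ s : ℝ, HasDerivAt E
      ((F s - fs) + s * ⟪gradient f (x s), deriv x s⟫
        + ⟪ζ s - xstar, deriv ζ s⟫) s := by
    intro s
    have hxd : HasDerivAt x (deriv x s) s := (hx_diff s).hasDerivAt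
    have hFd : HasDerivAt F ⟪gradient f (x s), deriv x s⟫ s := by
      have := (hf_diff (x s)).hasFDerivAt.comp_hasDerivAt s hxd
      simpa [hF, inner_gradient_apply', Function.comp_def] using this
    have h1 : HasDerivAt (fun u => u * (F u - fs))
        ((F s - fs) + s * ⟪gradient f (x s), deriv x s⟫) s := by
      have := (hasDerivAt_id s).mul (hFd.sub_const fs)
      simpa [mul_comm, Pi.mul_def] using this
    have hζd : HasDerivAt (fun u => ζ u - xstar) (deriv ζ s) s :=
      (hζ_diff s).hasDerivAt.sub_const xstar
    have h2i : HasDerivAt (fun u => ⟪ζ u - xstar, ζ u - xstar⟫)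
        (⟪ζ s - xstar, deriv ζ s⟫ + ⟪deriv ζ s, ζ s - xstar⟫) s :=
      hζd.inner ℝ hζd
    have h2 : HasDerivAt (fun u => ‖ζ u - xstar‖ ^ 2 / 2)
        (⟪ζ s - xstar, deriv ζ s⟫) s := by
      have := h2i.div_const 2
      have heq : (fun u => ⟪ζ u - xstar, ζ u - xstar⟫ / 2)
          = fun u => ‖ζ u - xstar‖ ^ 2 / 2 := by
        funext u; rw [real_inner_self_eq_norm_sq]
      rw [heq] at this
      rw [real_inner_comm (deriv ζ s) (ζ s - xstar), add_self_div_two] at this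
      rw [real_inner_comm]
      exact this
    exact h1.add h2
  -- E is nonincreasing on [0, T]
  have hderiv_nonpos : ∀ s ∈ Set.Ioo (0:ℝ) T, deriv E s ≤ 0 := by
    intro s hs
    have hs0 : (0:ℝ) ≤ s := hs.1.le
    rw [(hEderiv s).deriv]
    have hmir : s • deriv x s = ζ s - x s := by
      have := hmirror s hs0; rw [← this]; abel
    have hz : deriv ζ s = -gradient f (x s) := hζ' s hs0
    set g := gradient f (x s) with hgdef
    have e1 : s * ⟪g, deriv x s⟫ = ⟪g, ζ s - x s⟫ := by
      rw [← real_inner_smul_right, inner_smul_right, ← hmir]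
      simp [real_inner_smul_right]
    have e2 : ⟪ζ s - xstar, deriv ζ s⟫ = -⟪g, ζ s - xstar⟫ := by
      rw [real_inner_comm, hz, inner_neg_left]
    have e3 : ⟪g, ζ s - x s⟫ - ⟪g, ζ s - xstar⟫ = ⟪g, xstar - x s⟫ := by
      rw [inner_sub_right, inner_sub_right, inner_sub_right]; ring
    have hconv := convex_grad_ineq' f hf_conv hf_diff (x s) xstar
    rw [e1, e2]
    have : F s - fs + ⟪g, xstar - x s⟫ ≤ 0 := by
      simp only [hF, hfs]
      linarith [hconv]
    linarith [e3, this]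
  have hEcont : Continuous E := by
    have h1 : Continuous fun s : ℝ => s * (F s - fs) :=
      continuous_id.mul (hfx_cont.sub continuous_const)
    have h2 : Continuous fun s : ℝ => ‖ζ s - xstar‖ ^ 2 / 2 :=
      (((hζ_diff.continuous.sub continuous_const).norm.pow 2).div_const 2)
    exact h1.add h2
  have hanti : AntitoneOn E (Set.Icc 0 T) := by
    apply antitoneOn_of_deriv_nonpos (convex_Icc 0 T) (hEcont.continuousOn)
    · intro s hs
      exact (hEderiv s).differentiableAt.differentiableWithinAt
    · intro s hs
      rw [interior_Icc] at hs
      exact hderiv_nonpos s hs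
  have hET : E T ≤ E 0 :=
    hanti (Set.left_mem_Icc.2 hT.le) (Set.mem_Icc.2 ⟨hT.le, le_refl T⟩) hT.le
  have hE0 : E 0 = ‖xstar‖ ^ 2 / 2 := by
    simp [hE, hζ0]
  have hnormnonneg : (0:ℝ) ≤ ‖ζ T - xstar‖ ^ 2 / 2 := by positivity
  have hkey : T * (F T - fs) ≤ ‖xstar‖ ^ 2 / 2 := by
    have : E T = T * (F T - fs) + ‖ζ T - xstar‖ ^ 2 / 2 := rfl
    linarith [hET, hE0 ▸ hET]
  rw [le_div_iff₀ (by positivity)]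
  calc (F T - fs) * (2 * T) = 2 * (T * (F T - fs)) := by ring
    _ ≤ 2 * (‖xstar‖ ^ 2 / 2) := by linarith
    _ = ‖xstar‖ ^ 2 := by ring
end
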